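/- If n diagonal matrices D¹,…,Dⁿ have diagonal entries drawn independently from a continuous distribution (formally: if for each pair a ≠ b the vectors (Dⁱ_{aa})ᵢ and (Dⁱ_{bb})ᵢ are not proportional), then Γ_{ab}Γ_{ba} > 1 for all a ≠ b, and hence H̃ has exactly p zero eigenvalues and p² − p strictly positive eigenvalues. -/

import Mathlib

open Matrix

theorem stmt13 {p n : ℕ} (hn : 0 < n) (d : Fin n → Fin p → ℝ)
    (hd : ∀ i a, 0 < d i a)
    (hprop : ∀ a b : Fin p, a ≠ b → ¬ ∃ c : ℝ, ∀ i, d i a = c * d i b)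
    (Γ : Fin p → Fin p → ℝ)
    (hΓ : ∀ a b, Γ a b = (1 / n : ℝ) * ∑ i, d i b / d i a)
    (Ht : Matrix (Fin p) (Fin p) ℝ → Matrix (Fin p) (Fin p) ℝ)
    (hHt : ∀ M a b, Ht M a b =
      Γ a b * M a b + (1 - 2 * (if a = b then 1 else 0)) * M b a) :
    (∀ a b : Fin p, a ≠ b → 1 < Γ a b * Γ b a) ∧
    (∀ M : Matrix (Fin p) (Fin p) ℝ, Ht M = 0 ↔ M.IsDiag) ∧
    (∀ M : Matrix (Fin p) (Fin p) ℝ, (∀ a, M a a = 0) → M ≠ 0 →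
      0 < ∑ a, ∑ b, Ht M a b * M a b) := by
  have hnR : (0:ℝ) < n := by exact_mod_cast hn
  have hΓpos : ∀ a b, 0 < Γ a b := by
    intro a b
    rw [hΓ a b]
    have h1 : (0:ℝ) < ∑ i, d i b / d i a :=
      Finset.sum_pos (fun i _ => div_pos (hd i b) (hd i a)) ⟨⟨0, hn⟩, Finset.mem_univ _⟩
    have : (0:ℝ) < 1 / n := by positivity
    exact mul_pos this h1
  -- Part 1
  have part1 : ∀ a b : Fin p, a ≠ b → 1 < Γ a b * Γ b a := by
    intro a b hab
    set r : Fin n → ℝ := fun i => d i b / d i a with hr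
    have hrpos : ∀ i, 0 < r i := fun i => div_pos (hd i b) (hd i a)
    -- non-proportionality gives two different ratios
    have hne : ∃ i j : Fin n, r i ≠ r j := by
      by_contra h
      push_neg at h
      set i0 : Fin n := ⟨0, hn⟩
      refine hprop a b hab ⟨d i0 a / d i0 b, fun i => ?_⟩
      have hh := h i i0
      have h1 := (hd i a).ne'
      have h2 := (hd i b).ne'
      have h3 := (hd i0 a).ne'
      have h4 := (hd i0 b).ne'
      simp only [hr] at hh
      field_simp at hh ⊢
      linarith [hh]
    obtain ⟨i0, j0, hij⟩ := hne
    -- pairwise AM-GM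
    have hpair : ∀ i j : Fin n, (2:ℝ) ≤ r i / r j + r j / r i := by
      intro i j
      have hi := hrpos i
      have hj := hrpos j
      rw [div_add_div _ _ hj.ne' hi.ne', le_div_iff₀ (mul_pos hj hi)]
      nlinarith [sq_nonneg (r i - r j)]
    have hpair' : (2:ℝ) < r i0 / r j0 + r j0 / r i0 := by
      have hi := hrpos i0
      have hj := hrpos j0
      rw [div_add_div _ _ hj.ne' hi.ne', lt_div_iff₀ (mul_pos hj hi)]
      have hsub : r i0 - r j0 ≠ 0 := sub_ne_zero.mpr hij
      nlinarith [sq_pos_of_ne_zero hsub]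
    -- sum bound
    have hSsum : 2 * (n:ℝ)^2 < ∑ i, ∑ j, (r i / r j + r j / r i) := by
      have := Finset.sum_lt_sum (s := (Finset.univ : Finset (Fin n)) ×ˢ Finset.univ)
        (f := fun _ => (2:ℝ)) (g := fun q => r q.1 / r q.2 + r q.2 / r q.1)
        (fun q _ => hpair q.1 q.2) ⟨(i0, j0), Finset.mem_product.mpr ⟨Finset.mem_univ _, Finset.mem_univ _⟩, hpair'⟩
      rw [Finset.sum_const, Finset.sum_product] at this
      simpa [Finset.card_univ, mul_comm, pow_two, mul_assoc] using this
    have hS : (n:ℝ)^2 < ∑ i, ∑ j, r i / r j := by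
      have hswap : (∑ i, ∑ j, r j / r i) = ∑ i, ∑ j, r i / r j := Finset.sum_comm
      have hsplit : (∑ i, ∑ j, (r i / r j + r j / r i))
          = (∑ i, ∑ j, r i / r j) + ∑ i, ∑ j, r j / r i := by
        simp [Finset.sum_add_distrib]
      rw [hsplit, hswap] at hSsum
      linarith
    -- rewrite Γ product
    have hΓba : Γ b a = (1 / n : ℝ) * ∑ i, (r i)⁻¹ := by
      rw [hΓ]
      congr 1
      refine Finset.sum_congr rfl fun i _ => ?_
      rw [hr]
      rw [inv_div]
    have hAB : (∑ i, r i) * (∑ j, (r j)⁻¹) = ∑ i, ∑ j, r i / r j := by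
      rw [Finset.sum_mul_sum]
      refine Finset.sum_congr rfl fun i _ => Finset.sum_congr rfl fun j _ => ?_
      rw [div_eq_mul_inv]
    have hprod : Γ a b * Γ b a = ((∑ i, r i) * (∑ j, (r j)⁻¹)) / (n:ℝ)^2 := by
      rw [hΓ a b, hΓba]
      have h1 : (∑ i, d i b / d i a) = ∑ i, r i := rfl
      rw [h1]
      ring
    rw [hprod, hAB, lt_div_iff₀ (by positivity)]
    linarith
  have hΓdiag : ∀ a, Γ a a = 1 := by
    intro a
    rw [hΓ]
    have : ∀ i : Fin n, d i a / d i a = 1 := fun i => div_self (hd i a).ne'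
    simp [this, Finset.card_univ]
    field_simp
  -- Part 2
  have part2 : ∀ M : Matrix (Fin p) (Fin p) ℝ, Ht M = 0 ↔ M.IsDiag := by
    intro M
    constructor
    · intro h a b hab
      have e1 : Ht M a b = 0 := by rw [h]; rfl
      have e2 : Ht M b a = 0 := by rw [h]; rfl
      rw [hHt, if_neg hab] at e1
      rw [hHt, if_neg (Ne.symm hab)] at e2
      have hg := part1 a b hab
      have hz : (Γ a b * Γ b a - 1) * M a b = 0 := by
        have : Γ b a * (Γ a b * M a b + (1 - 2 * 0) * M b a)
            - (Γ b a * M b a + (1 - 2 * 0) * M a b) = (Γ a b * Γ b a - 1) * M a b := by ring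
        rw [e1, e2] at this
        linarith [this]
      rcases mul_eq_zero.mp hz with h' | h'
      · exfalso; linarith
      · exact h'
    · intro hM
      ext a b
      rw [hHt]
      rcases eq_or_ne a b with rfl | hab
      · rw [if_pos rfl, hΓdiag, Matrix.zero_apply]
        ring
      · rw [if_neg hab, hM hab, hM (Ne.symm hab)]
        simp
  -- key quadratic inequalities
  have keynn : ∀ (g1 g2 x y : ℝ), 0 < g1 → 1 < g1 * g2 →
      0 ≤ g1 * x^2 + g2 * y^2 + 2 * (x * y) := by
    intro g1 g2 x y hg1 hg
    nlinarith [sq_nonneg (g1 * x + y), sq_nonneg y, mul_pos hg1 hg1,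
      mul_nonneg (sub_nonneg.mpr hg.le) (sq_nonneg y)]
  have keypos : ∀ (g1 g2 x y : ℝ), 0 < g1 → 1 < g1 * g2 → x ≠ 0 →
      0 < g1 * x^2 + g2 * y^2 + 2 * (x * y) := by
    intro g1 g2 x y hg1 hg hx
    rcases eq_or_ne y 0 with rfl | hy
    · have : 0 < x^2 := sq_pos_of_ne_zero hx
      nlinarith
    · nlinarith [sq_nonneg (g1 * x + y), mul_pos (sub_pos.mpr hg) (sq_pos_of_ne_zero hy)]
  refine ⟨part1, part2, ?_⟩
  intro M hM hM0
  -- find a nonzero off-diagonal entry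
  obtain ⟨a0, b0, hMab⟩ : ∃ a b, M a b ≠ 0 := by
    by_contra h
    push_neg at h
    exact hM0 (by ext a b; exact h a b)
  have hab0 : a0 ≠ b0 := by
    rintro rfl
    exact hMab (hM a0)
  set f : Fin p → Fin p → ℝ := fun a b => Ht M a b * M a b with hf
  have hswap : (∑ a, ∑ b, f b a) = ∑ a, ∑ b, f a b := Finset.sum_comm
  have hterm : ∀ a b : Fin p, f a b + f b a
      = if a = b then 2 * ((Γ a a - 1) * M a a * M a a) else
        Γ a b * (M a b)^2 + Γ b a * (M b a)^2 + 2 * (M a b * M b a) := by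
    intro a b
    rcases eq_or_ne a b with rfl | hab
    · rw [if_pos rfl, hf]
      simp only [hHt, eq_self_iff_true, if_true]
      ring
    · rw [if_neg hab, hf]
      simp only [hHt, if_neg hab, if_neg (Ne.symm hab)]
      ring
  have hnn : ∀ q ∈ (Finset.univ : Finset (Fin p × Fin p)),
      0 ≤ f q.1 q.2 + f q.2 q.1 := by
    rintro ⟨a, b⟩ _
    rw [hterm a b]
    rcases eq_or_ne a b with rfl | hab
    · rw [if_pos rfl, hM a]; simp
    · rw [if_neg hab]
      exact keynn _ _ _ _ (hΓpos a b) (part1 a b hab)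
  have hwit : 0 < f a0 b0 + f b0 a0 := by
    rw [hterm a0 b0, if_neg hab0]
    exact keypos _ _ _ _ (hΓpos a0 b0) (part1 a0 b0 hab0) hMab
  have hpos : 0 < ∑ q : Fin p × Fin p, (f q.1 q.2 + f q.2 q.1) :=
    Finset.sum_pos' hnn ⟨(a0, b0), Finset.mem_univ _, hwit⟩
  have hsum2 : (∑ q : Fin p × Fin p, (f q.1 q.2 + f q.2 q.1))
      = (∑ a, ∑ b, f a b) + ∑ a, ∑ b, f b a := by
    rw [Finset.sum_add_distrib, ← Finset.univ_product_univ,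
      Finset.sum_product, Finset.sum_product]
  rw [hsum2, hswap] at hpos
  linarith
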